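/- Let b > 0, a > 0, c > 0 with a ≤ c, and let {V_k}_{k≥0} be a sequence of nonnegative real numbers such that for every k: if V_k > b then V_{k+1} ≤ V_k − c, and if V_k ≤ b then V_{k+1} ≤ b + a. Then there exists K ≤ ⌈max(V₀ − b, 0)/c⌉ such that V_k ≤ b + a for all k ≥ K. -/
import Mathlib

/-- Discrete practical-stability recursion: a nonnegative sequence that decreases by at
least `c` while above `b`, and overshoots by at most `a ≤ c` once below `b`, enters and
remains in the sublevel set `{V ≤ b + a}` within `⌈max(V₀ − b, 0)/c⌉` steps. -/
theorem stmt10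
    (b a c : ℝ) (hb : 0 < b) (ha : 0 < a) (hc : 0 < c) (hac : a ≤ c)
    (V : ℕ → ℝ) (hVnn : ∀ k, 0 ≤ V k)
    (h1 : ∀ k, b < V k → V (k + 1) ≤ V k - c)
    (h2 : ∀ k, V k ≤ b → V (k + 1) ≤ b + a) :
    ∃ K : ℕ, K ≤ ⌈max (V 0 - b) 0 / c⌉₊ ∧ ∀ k ≥ K, V k ≤ b + a := by
  set N := ⌈max (V 0 - b) 0 / c⌉₊ with hNdef
  have inv : ∀ k, V k ≤ b + a → V (k + 1) ≤ b + a := by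
    intro k h
    by_cases hk : V k ≤ b
    · exact h2 k hk
    · have := h1 k (lt_of_not_ge hk)
      linarith
  have key : ∃ k ≤ N, V k ≤ b + a := by
    by_contra hcon
    push_neg at hcon
    have hub : ∀ k ≤ N, V k ≤ V 0 - k * c := by
      intro k hk
      induction k with
      | zero => simp
      | succ n ih =>
        have hn : n ≤ N := Nat.le_of_succ_le hk
        have h3 := ih hn
        have h4 : b < V n := by have := hcon n hn; linarith
        have h5 := h1 n h4
        push_cast
        linarith
    have hceil : V 0 - b ≤ (N : ℝ) * c := by
      have h6 := Nat.le_ceil (max (V 0 - b) 0 / c)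
      have h7 : max (V 0 - b) 0 / c * c ≤ (N : ℝ) * c :=
        mul_le_mul_of_nonneg_right h6 hc.le
      have h8 : max (V 0 - b) 0 / c * c = max (V 0 - b) 0 := by
        field_simp
      have h9 : V 0 - b ≤ max (V 0 - b) 0 := le_max_left _ _
      linarith
    have h10 := hub N le_rfl
    have h11 := hcon N le_rfl
    linarith
  obtain ⟨K, hKN, hK⟩ := key
  refine ⟨K, hKN, ?_⟩
  have hall : ∀ m, V (K + m) ≤ b + a := by
    intro m
    induction m with
    | zero => simpa using hK
    | succ n ih => exact inv _ ih
  intro k hk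
  have : K + (k - K) = k := Nat.add_sub_cancel' hk
  simpa [this] using hall (k - K)
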